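/- For all integers n ≥ 1 and all real (or indeterminate) λ, the polynomials F_{2n}(λ) satisfy the second-order recurrence (4n+3)·F_{2n+4}(λ) + (4n+5)·(16n²+40n−2λ+21)·F_{2n+2}(λ) + (4n+7)·λ²·F_{2n}(λ) = 0. -/
import Mathlib


/-- The polynomial `F_n(λ)` from the paper:
`F_n(λ) = Σ_{j=0}^{ν} (−4)^{j−ν} ((2ν−2j+1)_n / (2j−2ν+n)!) λ^j` with `ν = ⌊n/2⌋`. -/
noncomputable def Fpoly (n : ℕ) (x : ℝ) : ℝ :=
  ∑ j ∈ Finset.range (n / 2 + 1),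
    (-4 : ℝ) ^ ((j : ℤ) - ((n / 2 : ℕ) : ℤ)) *
      ((ascPochhammer ℝ n).eval (2 * ((n / 2 : ℕ) : ℝ) - 2 * (j : ℝ) + 1) /
        (Nat.factorial (n - (2 * (n / 2) - 2 * j)) : ℝ)) * x ^ j

/-- The coefficient `(-4)^(j-m) (4m-2j)! / ((2m-2j)! (2j)!)` of `λ^j` in `F_{2m}`. -/
noncomputable def cF (m j : ℕ) : ℝ :=
  (-4 : ℝ) ^ ((j : ℤ) - (m : ℤ)) *
    ((Nat.factorial (4 * m - 2 * j) : ℝ) /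
      ((Nat.factorial (2 * m - 2 * j) : ℝ) * (Nat.factorial (2 * j) : ℝ)))

lemma cF_eval (j t : ℕ) :
    cF (j + t) j = ((-4 : ℝ) ^ t)⁻¹ *
      ((Nat.factorial (2 * j + 4 * t) : ℝ) /
        ((Nat.factorial (2 * t) : ℝ) * (Nat.factorial (2 * j) : ℝ))) := by
  unfold cF
  rw [show 4 * (j + t) - 2 * j = 2 * j + 4 * t from by omega,
    show 2 * (j + t) - 2 * j = 2 * t from by omega,
    show (j : ℤ) - ((j + t : ℕ) : ℤ) = -(t : ℤ) from by push_cast; ring,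
    zpow_neg, zpow_natCast]

lemma fact_ne (k : ℕ) : ((Nat.factorial k : ℕ) : ℝ) ≠ 0 := by
  exact_mod_cast (Nat.factorial_pos k).ne'

lemma fct2 (k : ℕ) :
    ((Nat.factorial (k + 2) : ℕ) : ℝ) =
      ((k : ℝ) + 2) * ((k : ℝ) + 1) * (Nat.factorial k : ℝ) := by
  rw [show k + 2 = (k + 1) + 1 from rfl, Nat.factorial_succ, Nat.factorial_succ]
  push_cast; ring

lemma fct4 (k : ℕ) :
    ((Nat.factorial (k + 4) : ℕ) : ℝ) =
      ((k : ℝ) + 4) * ((k : ℝ) + 3) * ((k : ℝ) + 2) * ((k : ℝ) + 1) *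
        (Nat.factorial k : ℝ) := by
  rw [show k + 4 = (k + 2) + 2 from rfl, fct2, fct2]
  push_cast; ring

lemma Fpoly_even (m : ℕ) (x : ℝ) :
    Fpoly (2 * m) x = ∑ j ∈ Finset.range (m + 1), cF m j * x ^ j := by
  unfold Fpoly cF
  rw [show (2 * m) / 2 = m from by omega]
  refine Finset.sum_congr rfl fun j hj => ?_
  have hjm : j ≤ m := Nat.lt_succ_iff.mp (Finset.mem_range.mp hj)
  rw [show 2 * m - (2 * m - 2 * j) = 2 * j from by omega]
  have h1 : (2 * (m : ℝ) - 2 * (j : ℝ) + 1) = ((2 * m - 2 * j : ℕ) : ℝ) + 1 := by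
    have h : (2 * j : ℕ) ≤ 2 * m := by omega
    push_cast [Nat.cast_sub h]; ring
  have h2 := factorial_mul_ascPochhammer ℝ (2 * m - 2 * j) (2 * m)
  rw [show (2 * m - 2 * j) + 2 * m = 4 * m - 2 * j from by omega] at h2
  have heval : (ascPochhammer ℝ (2 * m)).eval (((2 * m - 2 * j : ℕ) : ℝ) + 1) =
      (Nat.factorial (4 * m - 2 * j) : ℝ) / (Nat.factorial (2 * m - 2 * j) : ℝ) := by
    rw [eq_div_iff (fact_ne _), mul_comm]
    exact h2
  rw [h1, heval, div_div]

set_option maxHeartbeats 1000000 in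
/-- The key coefficient identity, generic interior case. -/
lemma cF_key (i t : ℕ) :
    (4 * ((i + t + 1 : ℕ) : ℝ) + 3) * cF (i + t + 3) (i + 2) +
      (4 * ((i + t + 1 : ℕ) : ℝ) + 5) * (16 * ((i + t + 1 : ℕ) : ℝ) ^ 2 +
        40 * ((i + t + 1 : ℕ) : ℝ) + 21) * cF (i + t + 2) (i + 2) -
      2 * (4 * ((i + t + 1 : ℕ) : ℝ) + 5) * cF (i + t + 2) (i + 1) +
      (4 * ((i + t + 1 : ℕ) : ℝ) + 7) * cF (i + t + 1) i = 0 := by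
  have e1 : cF (i + t + 3) (i + 2) = ((-4 : ℝ) ^ (t + 1))⁻¹ *
      ((Nat.factorial (2 * i + 4 * t + 8) : ℝ) /
        ((Nat.factorial (2 * t + 2) : ℝ) * (Nat.factorial (2 * i + 4) : ℝ))) := by
    rw [show i + t + 3 = (i + 2) + (t + 1) from by omega, cF_eval,
      show 2 * (i + 2) + 4 * (t + 1) = 2 * i + 4 * t + 8 from by omega,
      show 2 * (t + 1) = 2 * t + 2 from by omega,
      show 2 * (i + 2) = 2 * i + 4 from by omega]
  have e2 : cF (i + t + 2) (i + 2) = ((-4 : ℝ) ^ t)⁻¹ *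
      ((Nat.factorial (2 * i + 4 * t + 4) : ℝ) /
        ((Nat.factorial (2 * t) : ℝ) * (Nat.factorial (2 * i + 4) : ℝ))) := by
    rw [show i + t + 2 = (i + 2) + t from by omega, cF_eval,
      show 2 * (i + 2) + 4 * t = 2 * i + 4 * t + 4 from by omega,
      show 2 * (i + 2) = 2 * i + 4 from by omega]
  have e3 : cF (i + t + 2) (i + 1) = ((-4 : ℝ) ^ (t + 1))⁻¹ *
      ((Nat.factorial (2 * i + 4 * t + 6) : ℝ) /
        ((Nat.factorial (2 * t + 2) : ℝ) * (Nat.factorial (2 * i + 2) : ℝ))) := by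
    rw [show i + t + 2 = (i + 1) + (t + 1) from by omega, cF_eval,
      show 2 * (i + 1) + 4 * (t + 1) = 2 * i + 4 * t + 6 from by omega,
      show 2 * (t + 1) = 2 * t + 2 from by omega,
      show 2 * (i + 1) = 2 * i + 2 from by omega]
  have e4 : cF (i + t + 1) i = ((-4 : ℝ) ^ (t + 1))⁻¹ *
      ((Nat.factorial (2 * i + 4 * t + 4) : ℝ) /
        ((Nat.factorial (2 * t + 2) : ℝ) * (Nat.factorial (2 * i) : ℝ))) := by
    rw [show i + t + 1 = i + (t + 1) from by omega, cF_eval,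
      show 2 * i + 4 * (t + 1) = 2 * i + 4 * t + 4 from by omega,
      show 2 * (t + 1) = 2 * t + 2 from by omega]
  rw [e1, e2, e3, e4,
    show 2 * i + 4 * t + 8 = (2 * i + 4 * t + 4) + 4 from by omega,
    show 2 * i + 4 * t + 6 = (2 * i + 4 * t + 4) + 2 from by omega,
    show 2 * i + 4 = (2 * i + 2) + 2 from by omega,
    fct4 (2 * i + 4 * t + 4), fct2 (2 * i + 4 * t + 4), fct2 (2 * t), fct2 (2 * i + 2),
    fct2 (2 * i), pow_succ]
  have hA := fact_ne (2 * i + 4 * t + 4)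
  have hB := fact_ne (2 * t)
  have hC := fact_ne (2 * i)
  have hP : ((-4 : ℝ) ^ t) ≠ 0 := pow_ne_zero t (by norm_num)
  push_cast
  field_simp
  ring

lemma cF_diag (m : ℕ) : cF m m = 1 := by
  unfold cF
  rw [show 4 * m - 2 * m = 2 * m from by omega, show 2 * m - 2 * m = 0 from by omega,
    sub_self, zpow_zero, one_mul, Nat.factorial_zero, Nat.cast_one, one_mul,
    div_self (fact_ne _)]

set_option maxHeartbeats 1000000 in
/-- The per-coefficient vanishing, all cases. -/
lemma coeff_zero (n j : ℕ) (hj : j < n + 3) :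
    (4 * (n : ℝ) + 3) * cF (n + 2) j +
      (4 * (n : ℝ) + 5) * (16 * (n : ℝ) ^ 2 + 40 * (n : ℝ) + 21) *
        (if j ≤ n + 1 then cF (n + 1) j else 0) -
      2 * (4 * (n : ℝ) + 5) * (if 1 ≤ j then cF (n + 1) (j - 1) else 0) +
      (4 * (n : ℝ) + 7) * (if 2 ≤ j then cF n (j - 2) else 0) = 0 := by
  rcases Nat.lt_or_ge j 2 with h2 | h2
  · interval_cases j
    · -- j = 0
      rw [if_pos (by omega), if_neg (by omega), if_neg (by omega)]
      have e1 : cF (n + 2) 0 = ((-4 : ℝ) ^ (n + 2))⁻¹ *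
          ((Nat.factorial (4 * n + 8) : ℝ) /
            ((Nat.factorial (2 * n + 4) : ℝ) * (Nat.factorial 0 : ℝ))) := by
        rw [show n + 2 = 0 + (n + 2) from by omega, cF_eval,
          show 2 * 0 + 4 * (n + 2) = 4 * n + 8 from by omega,
          show 2 * (n + 2) = 2 * n + 4 from by omega]
        norm_num
      have e2 : cF (n + 1) 0 = ((-4 : ℝ) ^ (n + 1))⁻¹ *
          ((Nat.factorial (4 * n + 4) : ℝ) /
            ((Nat.factorial (2 * n + 2) : ℝ) * (Nat.factorial 0 : ℝ))) := by
        rw [show n + 1 = 0 + (n + 1) from by omega, cF_eval,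
          show 2 * 0 + 4 * (n + 1) = 4 * n + 4 from by omega,
          show 2 * (n + 1) = 2 * n + 2 from by omega]
        norm_num
      rw [e1, e2,
        show 4 * n + 8 = (4 * n + 4) + 4 from by omega,
        show 2 * n + 4 = (2 * n + 2) + 2 from by omega,
        fct4 (4 * n + 4), fct2 (2 * n + 2), pow_succ]
      have hA := fact_ne (4 * n + 4)
      have hB := fact_ne (2 * n + 2)
      have hP : ((-4 : ℝ) ^ (n + 1)) ≠ 0 := pow_ne_zero _ (by norm_num)
      simp only [Nat.factorial_zero, Nat.cast_one]
      push_cast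
      field_simp
      ring
    · -- j = 1
      rw [if_pos (by omega), if_pos (by omega), if_neg (by omega)]
      have e1 : cF (n + 2) 1 = ((-4 : ℝ) ^ (n + 1))⁻¹ *
          ((Nat.factorial (4 * n + 6) : ℝ) /
            ((Nat.factorial (2 * n + 2) : ℝ) * (Nat.factorial 2 : ℝ))) := by
        rw [show n + 2 = 1 + (n + 1) from by omega, cF_eval,
          show 2 * 1 + 4 * (n + 1) = 4 * n + 6 from by omega,
          show 2 * (n + 1) = 2 * n + 2 from by omega]
      have e2 : cF (n + 1) 1 = ((-4 : ℝ) ^ n)⁻¹ *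
          ((Nat.factorial (4 * n + 2) : ℝ) /
            ((Nat.factorial (2 * n) : ℝ) * (Nat.factorial 2 : ℝ))) := by
        rw [show n + 1 = 1 + n from by omega, cF_eval,
          show 2 * 1 + 4 * n = 4 * n + 2 from by omega]
      have e3 : cF (n + 1) (1 - 1) = ((-4 : ℝ) ^ (n + 1))⁻¹ *
          ((Nat.factorial (4 * n + 4) : ℝ) /
            ((Nat.factorial (2 * n + 2) : ℝ) * (Nat.factorial 0 : ℝ))) := by
        rw [show (1 : ℕ) - 1 = 0 from rfl,
          show n + 1 = 0 + (n + 1) from by omega, cF_eval,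
          show 2 * 0 + 4 * (n + 1) = 4 * n + 4 from by omega,
          show 2 * (n + 1) = 2 * n + 2 from by omega]
        norm_num
      rw [e1, e2, e3,
        show 4 * n + 6 = (4 * n + 2) + 4 from by omega,
        show 4 * n + 4 = (4 * n + 2) + 2 from by omega,
        fct4 (4 * n + 2), fct2 (4 * n + 2), fct2 (2 * n), pow_succ]
      have hA := fact_ne (4 * n + 2)
      have hB := fact_ne (2 * n)
      have hP : ((-4 : ℝ) ^ n) ≠ 0 := pow_ne_zero _ (by norm_num)
      simp only [Nat.factorial_zero, Nat.cast_one,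
        show Nat.factorial 2 = 2 from rfl, Nat.cast_ofNat]
      push_cast
      field_simp
      ring
  · rcases Nat.lt_or_ge j (n + 2) with htop | htop
    · -- 2 ≤ j ≤ n + 1
      obtain ⟨i, rfl⟩ : ∃ i, j = i + 2 := ⟨j - 2, by omega⟩
      obtain ⟨t, rfl⟩ : ∃ t, n = i + t + 1 := ⟨n - i - 1, by omega⟩
      rw [if_pos (by omega), if_pos (by omega), if_pos (by omega),
        show i + 2 - 1 = i + 1 from by omega, show i + 2 - 2 = i from by omega,
        show i + t + 1 + 2 = i + t + 3 from by omega,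
        show i + t + 1 + 1 = i + t + 2 from by omega]
      have := cF_key i t
      push_cast at this ⊢
      linarith [this]
    · -- j = n + 2
      have hjn : j = n + 2 := by omega
      subst hjn
      rw [if_neg (by omega), if_pos (by omega), if_pos (by omega),
        show n + 2 - 1 = n + 1 from by omega, show n + 2 - 2 = n from by omega,
        cF_diag, cF_diag, cF_diag]
      ring

/-- The second-order recurrence satisfied by the polynomials `F_{2n}(λ)`:
`(4n+3) F_{2n+4}(λ) + (4n+5)(16n²+40n−2λ+21) F_{2n+2}(λ) + (4n+7) λ² F_{2n}(λ) = 0`. -/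
theorem Fpoly_recurrence (n : ℕ) (hn : 1 ≤ n) (lam : ℝ) :
    (4 * (n : ℝ) + 3) * Fpoly (2 * n + 4) lam +
      (4 * (n : ℝ) + 5) * (16 * (n : ℝ) ^ 2 + 40 * (n : ℝ) - 2 * lam + 21) *
        Fpoly (2 * n + 2) lam +
      (4 * (n : ℝ) + 7) * lam ^ 2 * Fpoly (2 * n) lam = 0 := by
  rw [show 2 * n + 4 = 2 * (n + 2) from by ring, show 2 * n + 2 = 2 * (n + 1) from by ring,
    Fpoly_even, Fpoly_even, Fpoly_even]
  have hS2 : ∑ j ∈ Finset.range (n + 2), cF (n + 1) j * lam ^ j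
      = ∑ j ∈ Finset.range (n + 3), (if j ≤ n + 1 then cF (n + 1) j else 0) * lam ^ j := by
    rw [Finset.sum_range_succ (fun j => (if j ≤ n + 1 then cF (n + 1) j else 0) * lam ^ j),
      if_neg (by omega), zero_mul, add_zero]
    exact Finset.sum_congr rfl fun j hj => by
      rw [if_pos (Nat.lt_succ_iff.mp (Finset.mem_range.mp hj))]
  have hS3 : lam * ∑ j ∈ Finset.range (n + 2), cF (n + 1) j * lam ^ j
      = ∑ j ∈ Finset.range (n + 3),
          (if 1 ≤ j then cF (n + 1) (j - 1) else 0) * lam ^ j := by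
    rw [Finset.sum_range_succ' (fun j => (if 1 ≤ j then cF (n + 1) (j - 1) else 0) * lam ^ j)
      (n + 2), if_neg (by omega : ¬ (1 : ℕ) ≤ 0), zero_mul, add_zero, Finset.mul_sum]
    refine Finset.sum_congr rfl fun j _ => ?_
    rw [if_pos (by omega : 1 ≤ j + 1), show j + 1 - 1 = j from by omega, pow_succ]
    ring
  have hS4 : lam ^ 2 * ∑ j ∈ Finset.range (n + 1), cF n j * lam ^ j
      = ∑ j ∈ Finset.range (n + 3),
          (if 2 ≤ j then cF n (j - 2) else 0) * lam ^ j := by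
    rw [Finset.sum_range_succ' (fun j => (if 2 ≤ j then cF n (j - 2) else 0) * lam ^ j)
      (n + 2), if_neg (by omega : ¬ (2 : ℕ) ≤ 0), zero_mul, add_zero,
      Finset.sum_range_succ' (fun j => (if 2 ≤ j + 1 then cF n (j + 1 - 2) else 0) * lam ^ (j + 1))
      (n + 1), if_neg (by omega : ¬ (2 : ℕ) ≤ 0 + 1), zero_mul, add_zero, Finset.mul_sum]
    refine Finset.sum_congr rfl fun j _ => ?_
    rw [if_pos (by omega : 2 ≤ j + 1 + 1), show j + 1 + 1 - 2 = j from by omega]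
    ring
  have hsplit :
      (4 * (n : ℝ) + 3) * (∑ j ∈ Finset.range (n + 3), cF (n + 2) j * lam ^ j) +
        (4 * (n : ℝ) + 5) * (16 * (n : ℝ) ^ 2 + 40 * (n : ℝ) - 2 * lam + 21) *
          (∑ j ∈ Finset.range (n + 2), cF (n + 1) j * lam ^ j) +
        (4 * (n : ℝ) + 7) * lam ^ 2 * (∑ j ∈ Finset.range (n + 1), cF n j * lam ^ j)
      = (4 * (n : ℝ) + 3) * (∑ j ∈ Finset.range (n + 3), cF (n + 2) j * lam ^ j) +
        ((4 * (n : ℝ) + 5) * (16 * (n : ℝ) ^ 2 + 40 * (n : ℝ) + 21)) *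
          (∑ j ∈ Finset.range (n + 2), cF (n + 1) j * lam ^ j) -
        (2 * (4 * (n : ℝ) + 5)) *
          (lam * ∑ j ∈ Finset.range (n + 2), cF (n + 1) j * lam ^ j) +
        (4 * (n : ℝ) + 7) *
          (lam ^ 2 * ∑ j ∈ Finset.range (n + 1), cF n j * lam ^ j) := by
    ring
  rw [hsplit, hS3, hS4, hS2, Finset.mul_sum, Finset.mul_sum, Finset.mul_sum, Finset.mul_sum,
    ← Finset.sum_add_distrib, ← Finset.sum_sub_distrib, ← Finset.sum_add_distrib]
  refine Finset.sum_eq_zero fun j hj => ?_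
  have h0 := coeff_zero n j (Finset.mem_range.mp hj)
  linear_combination lam ^ j * h0
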